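/- For any integer k ≥ 1 and finitely supported functions f₁,f₁',…,f_k,f_k' : G → ℂ on an abelian group, |Σ_x (f₁∘f₁')(x)⋯(f_k∘f_k')(x)| ≤ ∏_{j=1}^k ‖|f_j|‖_{E_k} · ‖|f_j'|‖_{E_k}, where (f∘g)(x) := Σ_y \overline{f(y)}g(y+x) and ‖g‖_{E_k} := (Σ_x ((g∘g)(x))^k)^{1/(2k)} for nonnegative g. -/

import Mathlib

open Finset
open scoped Pointwise

/-- Correlation with conjugation: `(f ∘ g)(x) = Σ_y conj(f(y)) g(y + x)`. -/
noncomputable def corrC {G : Type*} [AddCommGroup G] (f g : G → ℂ) : G → ℂ :=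
  fun x => ∑ᶠ y : G, (starRingEnd ℂ) (f y) * g (y + x)

/-- The `E_k` norm of a (nonnegative real-valued) function. -/
noncomputable def normEk {G : Type*} [AddCommGroup G] (k : ℕ) (h : G → ℝ) : ℝ :=
  (∑ᶠ x : G, (∑ᶠ y : G, h y * h (y + x)) ^ k) ^ ((1 : ℝ) / (2 * k))

/-- k-fold Hölder inequality for finite sums of nonnegative reals. -/
private lemma holderK {ι α : Type*} [Fintype ι] (S : Finset α) {k : ℕ} (hk : k ≠ 0)
    (hcard : Fintype.card ι = k) (u : ι → α → ℝ) (hu : ∀ j x, 0 ≤ u j x) :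
    ∑ x ∈ S, ∏ j, u j x ≤ ∏ j, (∑ x ∈ S, u j x ^ k) ^ ((k : ℝ)⁻¹) := by
  have hkR : (k : ℝ) ≠ 0 := Nat.cast_ne_zero.2 hk
  have hS : ∀ j, 0 ≤ ∑ x ∈ S, u j x ^ k := fun j =>
    Finset.sum_nonneg fun x _ => pow_nonneg (hu j x) k
  by_cases h0 : ∃ j, ∑ x ∈ S, u j x ^ k = 0
  · obtain ⟨j0, hj0⟩ := h0
    have hzero : ∀ x ∈ S, u j0 x = 0 := by
      intro x hx
      have h := (Finset.sum_eq_zero_iff_of_nonneg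
        (fun x _ => pow_nonneg (hu j0 x) k)).1 hj0 x hx
      exact pow_eq_zero_iff hk |>.1 h
    have hL : ∑ x ∈ S, ∏ j, u j x = 0 :=
      Finset.sum_eq_zero fun x hx => Finset.prod_eq_zero (Finset.mem_univ j0) (hzero x hx)
    rw [hL]
    exact Finset.prod_nonneg fun j _ => Real.rpow_nonneg (hS j) _
  push_neg at h0
  have hSpos : ∀ j, 0 < ∑ x ∈ S, u j x ^ k := fun j => (hS j).lt_of_ne' (h0 j)
  set N : ι → ℝ := fun j => (∑ x ∈ S, u j x ^ k) ^ ((k : ℝ)⁻¹) with hN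
  have hNpos : ∀ j, 0 < N j := fun j => Real.rpow_pos_of_pos (hSpos j) _
  have hNk : ∀ j, N j ^ k = ∑ x ∈ S, u j x ^ k := by
    intro j
    rw [hN, ← Real.rpow_natCast ((∑ x ∈ S, u j x ^ k) ^ ((k : ℝ)⁻¹)) k,
      ← Real.rpow_mul (hS j), inv_mul_cancel₀ hkR, Real.rpow_one]
  have key : ∀ x ∈ S, ∏ j, u j x ≤ (∏ j, N j) * ((k : ℝ)⁻¹ * ∑ j, (u j x / N j) ^ k) := by
    intro x hx
    have hAM : ∏ j, u j x / N j ≤ (k : ℝ)⁻¹ * ∑ j, (u j x / N j) ^ k := by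
      have h := Real.geom_mean_le_arith_mean_weighted Finset.univ (fun _ => (k : ℝ)⁻¹)
        (fun j => (u j x / N j) ^ k) (fun i _ => inv_nonneg.2 (Nat.cast_nonneg k))
        (by rw [Finset.sum_const, Finset.card_univ, hcard, nsmul_eq_mul,
              mul_inv_cancel₀ hkR])
        (fun i _ => pow_nonneg (div_nonneg (hu i x) (hNpos i).le) k)
      calc ∏ j, u j x / N j = ∏ j, ((u j x / N j) ^ k) ^ ((k : ℝ)⁻¹) := by
            refine Finset.prod_congr rfl fun j _ => ?_
            rw [← Real.rpow_natCast (u j x / N j) k, ← Real.rpow_mul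
              (div_nonneg (hu j x) (hNpos j).le), mul_inv_cancel₀ hkR, Real.rpow_one]
        _ ≤ ∑ j, (k : ℝ)⁻¹ * (u j x / N j) ^ k := h
        _ = (k : ℝ)⁻¹ * ∑ j, (u j x / N j) ^ k := by rw [← Finset.mul_sum]
    calc ∏ j, u j x = (∏ j, N j) * ∏ j, u j x / N j := by
          rw [← Finset.prod_mul_distrib]
          exact Finset.prod_congr rfl fun j _ => (mul_div_cancel₀ _ (hNpos j).ne').symm
      _ ≤ (∏ j, N j) * ((k : ℝ)⁻¹ * ∑ j, (u j x / N j) ^ k) :=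
          mul_le_mul_of_nonneg_left hAM (Finset.prod_nonneg fun j _ => (hNpos j).le)
  calc ∑ x ∈ S, ∏ j, u j x
      ≤ ∑ x ∈ S, (∏ j, N j) * ((k : ℝ)⁻¹ * ∑ j, (u j x / N j) ^ k) := Finset.sum_le_sum key
    _ = (∏ j, N j) * ((k : ℝ)⁻¹ * ∑ j, ∑ x ∈ S, (u j x / N j) ^ k) := by
        rw [← Finset.mul_sum, ← Finset.mul_sum, Finset.sum_comm]
    _ = ∏ j, N j := by
        have h1 : ∀ j, ∑ x ∈ S, (u j x / N j) ^ k = 1 := by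
          intro j
          simp_rw [div_pow, ← Finset.sum_div]
          rw [hNk j, div_self (hSpos j).ne']
        simp_rw [h1]
        rw [Finset.sum_const, Finset.card_univ, hcard, nsmul_eq_mul, mul_one,
          inv_mul_cancel₀ hkR, mul_one]

private lemma keyId {G : Type*} [AddCommGroup G] [DecidableEq G] {k : ℕ} [NeZero k]
    (g g' : G → ℝ) (A B : Finset G)
    (hA : Function.support g ⊆ ↑A) (hB : Function.support g' ⊆ ↑B)
    (D : Finset G) (hD : ∀ a ∈ A, ∀ b ∈ A, a - b ∈ D) :
    ∑ x ∈ B - A, (∑ y ∈ A, g y * g' (y + x)) ^ k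
      = ∑ e ∈ (Fintype.piFinset fun _ : Fin k => D).filter (fun e => e 0 = 0),
          (∑ b ∈ A, ∏ i, g (b + e i)) * (∑ z ∈ B, ∏ i, g' (z + e i)) := by
  classical
  set E := (Fintype.piFinset fun _ : Fin k => D).filter (fun e => e 0 = 0) with hE
  set F : G × (Fin k → G) → ℝ :=
    fun q => (∏ i, g (q.2 i)) * ∏ i, g' (q.2 i + q.1) with hF
  set H : (Fin k → G) × G × G → ℝ :=
    fun r => (∏ i, g (r.2.1 + r.1 i)) * ∏ i, g' (r.2.2 + r.1 i) with hH
  have expand : ∀ x : G, (∑ y ∈ A, g y * g' (y + x)) ^ k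
      = ∑ p ∈ Fintype.piFinset (fun _ : Fin k => A), F (x, p) := by
    intro x
    have h1 : (∑ y ∈ A, g y * g' (y + x)) ^ k
        = ∏ _i : Fin k, ∑ y ∈ A, g y * g' (y + x) := by
      rw [Finset.prod_const, Finset.card_univ, Fintype.card_fin]
    rw [h1, Finset.prod_univ_sum]
    exact Finset.sum_congr rfl fun p _ => by rw [hF, Finset.prod_mul_distrib]
  calc ∑ x ∈ B - A, (∑ y ∈ A, g y * g' (y + x)) ^ k
      = ∑ q ∈ (B - A) ×ˢ Fintype.piFinset (fun _ : Fin k => A), F q := by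
        rw [Finset.sum_product]
        exact Finset.sum_congr rfl fun x _ => expand x
    _ = ∑ q ∈ ((B - A) ×ˢ Fintype.piFinset (fun _ : Fin k => A)).filter (fun q => F q ≠ 0),
          F q := (Finset.sum_filter_ne_zero _).symm
    _ = ∑ r ∈ (E ×ˢ A ×ˢ B).filter (fun r => H r ≠ 0), H r := by
        refine Finset.sum_nbij' (fun q => (fun i => q.2 i - q.2 0, q.2 0, q.2 0 + q.1))
          (fun r => (r.2.2 - r.2.1, fun i => r.2.1 + r.1 i)) ?_ ?_ ?_ ?_ ?_
        · rintro ⟨x, p⟩ hq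
          rw [Finset.mem_filter] at hq
          obtain ⟨hmem, hne⟩ := hq
          rw [Finset.mem_product, Fintype.mem_piFinset] at hmem
          obtain ⟨hx, hp⟩ := hmem
          have hgg : (∏ i, g (p i)) ≠ 0 ∧ (∏ i, g' (p i + x)) ≠ 0 := mul_ne_zero_iff.1 hne
          have hg'x : ∀ i, g' (p i + x) ≠ 0 := fun i =>
            Finset.prod_ne_zero_iff.1 hgg.2 i (Finset.mem_univ i)
          have hval : H (fun i => p i - p 0, p 0, p 0 + x) = F (x, p) := by
            simp only [hH, hF]
            congr 1
            · exact Finset.prod_congr rfl fun i _ => by rw [show p 0 + (p i - p 0) = p i by abel]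
            · exact Finset.prod_congr rfl fun i _ => by
                rw [show p 0 + x + (p i - p 0) = p i + x by abel]
          rw [Finset.mem_filter, Finset.mem_product, Finset.mem_product]
          refine ⟨⟨?_, hp 0, ?_⟩, by rw [hval]; exact hne⟩
          · rw [hE, Finset.mem_filter, Fintype.mem_piFinset]
            exact ⟨fun i => hD (p i) (hp i) (p 0) (hp 0), by simp⟩
          · exact hB (hg'x 0)
        · rintro ⟨e, b, z⟩ hr
          rw [Finset.mem_filter, Finset.mem_product, Finset.mem_product] at hr
          obtain ⟨⟨he, hb, hz⟩, hne⟩ := hr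
          have he0 : e 0 = 0 := (Finset.mem_filter.1 he).2
          have hgg : (∏ i, g (b + e i)) ≠ 0 ∧ (∏ i, g' (z + e i)) ≠ 0 := mul_ne_zero_iff.1 hne
          have hgx : ∀ i, g (b + e i) ≠ 0 := fun i =>
            Finset.prod_ne_zero_iff.1 hgg.1 i (Finset.mem_univ i)
          have hval : F (z - b, fun i => b + e i) = H (e, b, z) := by
            simp only [hH, hF]
            congr 1
            exact Finset.prod_congr rfl fun i _ => by
              rw [show b + e i + (z - b) = z + e i by abel]
          rw [Finset.mem_filter, Finset.mem_product, Fintype.mem_piFinset]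
          refine ⟨⟨Finset.mem_sub.2 ⟨z, hz, b, hb, rfl⟩, fun i => hA (hgx i)⟩,
            by rw [hval]; exact hne⟩
        · rintro ⟨x, p⟩ _
          refine Prod.ext ?_ (funext fun i => ?_) <;> simp
        · rintro ⟨e, b, z⟩ hr
          rw [Finset.mem_filter, Finset.mem_product, Finset.mem_product] at hr
          have he0 : e 0 = 0 := (Finset.mem_filter.1 hr.1.1).2
          refine Prod.ext (funext fun i => ?_) (Prod.ext ?_ ?_) <;> simp [he0]
        · rintro ⟨x, p⟩ hq
          rw [Finset.mem_filter] at hq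
          simp only [hH, hF]
          congr 1
          · exact Finset.prod_congr rfl fun i _ => by rw [show p 0 + (p i - p 0) = p i by abel]
          · exact Finset.prod_congr rfl fun i _ => by
              rw [show p 0 + x + (p i - p 0) = p i + x by abel]
    _ = ∑ r ∈ E ×ˢ A ×ˢ B, H r := Finset.sum_filter_ne_zero _
    _ = ∑ e ∈ E, (∑ b ∈ A, ∏ i, g (b + e i)) * (∑ z ∈ B, ∏ i, g' (z + e i)) := by
        rw [Finset.sum_product]
        refine Finset.sum_congr rfl fun e _ => ?_
        rw [Finset.sum_product, Finset.sum_mul_sum]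

private lemma cs_step {G : Type*} [AddCommGroup G] [DecidableEq G] {k : ℕ} [NeZero k]
    (g g' : G → ℝ) (A B : Finset G)
    (hA : Function.support g ⊆ ↑A) (hB : Function.support g' ⊆ ↑B) :
    ∑ x ∈ B - A, (∑ y ∈ A, g y * g' (y + x)) ^ k
      ≤ Real.sqrt (∑ x ∈ A - A, (∑ y ∈ A, g y * g (y + x)) ^ k) *
        Real.sqrt (∑ x ∈ B - B, (∑ y ∈ B, g' y * g' (y + x)) ^ k) := by
  classical
  set D := (A - A) ∪ (B - B) with hD
  have h1 : ∀ a ∈ A, ∀ b ∈ A, a - b ∈ D := fun a ha b hb =>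
    Finset.mem_union_left _ (Finset.sub_mem_sub ha hb)
  have h2 : ∀ a ∈ B, ∀ b ∈ B, a - b ∈ D := fun a ha b hb =>
    Finset.mem_union_right _ (Finset.sub_mem_sub ha hb)
  rw [keyId g g' A B hA hB D h1, keyId g g A A hA hA D h1, keyId g' g' B B hB hB D h2]
  have h := Real.sum_mul_le_sqrt_mul_sqrt
    ((Fintype.piFinset fun _ : Fin k => D).filter (fun e => e 0 = 0))
    (fun e => ∑ b ∈ A, ∏ i, g (b + e i)) (fun e => ∑ z ∈ B, ∏ i, g' (z + e i))
  simpa [sq] using h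

theorem stmt_11 {G : Type*} [AddCommGroup G] (k : ℕ) (hk : 1 ≤ k)
    (f f' : Fin k → G → ℂ)
    (hf : ∀ j, (Function.support (f j)).Finite)
    (hf' : ∀ j, (Function.support (f' j)).Finite) :
    ‖∑ᶠ x : G, ∏ j : Fin k, corrC (f j) (f' j) x‖
      ≤ ∏ j : Fin k,
          normEk k (fun t => ‖f j t‖) * normEk k (fun t => ‖f' j t‖) := by
  classical
  haveI : NeZero k := ⟨by omega⟩
  set A : Fin k → Finset G := fun j => (hf j).toFinset with hA
  set B : Fin k → Finset G := fun j => (hf' j).toFinset with hB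
  -- supports of the absolute values
  have hsupA : ∀ j, Function.support (fun t => ‖f j t‖) ⊆ ↑(A j) := by
    intro j t ht
    simp only [Function.mem_support, norm_ne_zero_iff] at ht
    simpa [hA, Set.Finite.coe_toFinset] using ht
  have hsupB : ∀ j, Function.support (fun t => ‖f' j t‖) ⊆ ↑(B j) := by
    intro j t ht
    simp only [Function.mem_support, norm_ne_zero_iff] at ht
    simpa [hB, Set.Finite.coe_toFinset] using ht
  -- corrC as a finite sum
  have hcorr : ∀ j x, corrC (f j) (f' j) x
      = ∑ y ∈ A j, (starRingEnd ℂ) (f j y) * f' j (y + x) := by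
    intro j x
    apply finsum_eq_sum_of_support_subset
    intro y hy
    simp only [Function.mem_support] at hy
    have : f j y ≠ 0 := by
      intro h0; exact hy (by simp [h0])
    simpa [hA, Set.Finite.coe_toFinset] using this
  set c : Fin k → G → ℝ :=
    fun j x => ∑ y ∈ A j, ‖f j y‖ * ‖f' j (y + x)‖ with hc
  have hcnonneg : ∀ j x, 0 ≤ c j x := fun j x =>
    Finset.sum_nonneg fun y _ => mul_nonneg (norm_nonneg _) (norm_nonneg _)
  have habs : ∀ j x, ‖corrC (f j) (f' j) x‖ ≤ c j x := by
    intro j x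
    rw [hcorr]
    refine (norm_sum_le _ _).trans_eq ?_
    exact Finset.sum_congr rfl fun y _ => by rw [norm_mul, Complex.norm_conj]
  have hcsupp : ∀ j x, x ∉ B j - A j → c j x = 0 := by
    intro j x hx
    refine Finset.sum_eq_zero fun y hy => ?_
    by_contra hne
    obtain ⟨h1, h2⟩ := mul_ne_zero_iff.1 hne
    refine hx (Finset.mem_sub.2 ⟨y + x, ?_, y, hy, by abel⟩)
    rw [hB, Set.Finite.mem_toFinset, Function.mem_support]
    exact fun h0 => h2 (by simp [h0])
  set S : Finset G := Finset.univ.biUnion (fun j => B j - A j) with hS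
  -- the full sum lives on S
  have hsum : ∑ᶠ x : G, ∏ j : Fin k, corrC (f j) (f' j) x
      = ∑ x ∈ S, ∏ j : Fin k, corrC (f j) (f' j) x := by
    apply finsum_eq_sum_of_support_subset
    intro x hx
    simp only [Function.mem_support] at hx
    by_contra hxS
    apply hx
    have hx0 : x ∉ B 0 - A 0 := fun h =>
      hxS (Finset.mem_coe.2 (Finset.mem_biUnion.2 ⟨0, Finset.mem_univ _, h⟩))
    refine Finset.prod_eq_zero (Finset.mem_univ (0 : Fin k)) ?_
    rw [hcorr]
    refine Finset.sum_eq_zero fun y hy => ?_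
    by_contra hne
    obtain ⟨h1, h2⟩ := mul_ne_zero_iff.1 hne
    refine hx0 (Finset.mem_sub.2 ⟨y + x, ?_, y, hy, by abel⟩)
    rw [hB, Set.Finite.mem_toFinset, Function.mem_support]
    exact h2
  -- the per-factor bound
  have bound : ∀ j : Fin k, (∑ x ∈ S, c j x ^ k) ^ ((k : ℝ)⁻¹)
      ≤ normEk k (fun t => ‖f j t‖) * normEk k (fun t => ‖f' j t‖) := by
    intro j
    have hred : ∑ x ∈ S, c j x ^ k = ∑ x ∈ B j - A j, c j x ^ k := by
      symm
      have hsubS : B j - A j ⊆ S := by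
        rw [hS]; exact Finset.subset_biUnion_of_mem (fun j => B j - A j) (Finset.mem_univ j)
      refine Finset.sum_subset hsubS ?_
      intro x _ hx
      rw [hcsupp j x hx, zero_pow (NeZero.ne k)]
    have hnorm : ∀ (h : G → ℂ) (hh : (Function.support h).Finite),
        normEk k (fun t => ‖h t‖)
          = (∑ x ∈ hh.toFinset - hh.toFinset,
              (∑ y ∈ hh.toFinset, ‖h y‖ * ‖h (y + x)‖) ^ k)
            ^ ((1 : ℝ) / (2 * k)) := by
      intro h hh
      have hsup : Function.support (fun t => ‖h t‖) ⊆ ↑hh.toFinset := by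
        intro t ht
        simp only [Function.mem_support, norm_ne_zero_iff] at ht
        simpa [Set.Finite.coe_toFinset] using ht
      have hin : ∀ x, (∑ᶠ y, ‖h y‖ * ‖h (y + x)‖)
          = ∑ y ∈ hh.toFinset, ‖h y‖ * ‖h (y + x)‖ := by
        intro x
        apply finsum_eq_sum_of_support_subset
        intro y hy
        simp only [Function.mem_support] at hy
        refine hsup ?_
        simp only [Function.mem_support, norm_ne_zero_iff]
        intro h0
        exact hy (by simp [h0])
      unfold normEk
      congr 1
      simp_rw [hin]
      apply finsum_eq_sum_of_support_subset
      intro x hx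
      simp only [Function.mem_support] at hx
      have hbase : (∑ y ∈ hh.toFinset, ‖h y‖ * ‖h (y + x)‖) ≠ 0 :=
        fun h0 => hx (by rw [h0, zero_pow (NeZero.ne k)])
      obtain ⟨y, hy, hne⟩ := Finset.exists_ne_zero_of_sum_ne_zero hbase
      obtain ⟨h1, h2⟩ := mul_ne_zero_iff.1 hne
      refine Finset.mem_coe.2 (Finset.mem_sub.2 ⟨y + x, ?_, y, hy, by abel⟩)
      rw [Set.Finite.mem_toFinset, Function.mem_support]
      exact fun h0 => h2 (by rw [h0, norm_zero])
    have hcs := cs_step (k := k) (fun t => ‖f j t‖) (fun t => ‖f' j t‖)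
      (A j) (B j) (hsupA j) (hsupB j)
    have hSg : (0:ℝ) ≤ ∑ x ∈ A j - A j,
        (∑ y ∈ A j, ‖f j y‖ * ‖f j (y + x)‖) ^ k :=
      Finset.sum_nonneg fun x _ => pow_nonneg (Finset.sum_nonneg fun y _ =>
        mul_nonneg (norm_nonneg _) (norm_nonneg _)) k
    have hSg' : (0:ℝ) ≤ ∑ x ∈ B j - B j,
        (∑ y ∈ B j, ‖f' j y‖ * ‖f' j (y + x)‖) ^ k :=
      Finset.sum_nonneg fun x _ => pow_nonneg (Finset.sum_nonneg fun y _ =>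
        mul_nonneg (norm_nonneg _) (norm_nonneg _)) k
    rw [hred, hnorm (f j) (hf j), hnorm (f' j) (hf' j)]
    calc (∑ x ∈ B j - A j, c j x ^ k) ^ ((k : ℝ)⁻¹)
        ≤ (Real.sqrt (∑ x ∈ A j - A j,
              (∑ y ∈ A j, ‖f j y‖ * ‖f j (y + x)‖) ^ k) *
           Real.sqrt (∑ x ∈ B j - B j,
              (∑ y ∈ B j, ‖f' j y‖ * ‖f' j (y + x)‖) ^ k))
            ^ ((k : ℝ)⁻¹) := by
          refine Real.rpow_le_rpow (Finset.sum_nonneg fun x _ =>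
            pow_nonneg (hcnonneg j x) k) ?_ (by positivity)
          exact hcs
      _ = _ := by
          rw [Real.mul_rpow (Real.sqrt_nonneg _) (Real.sqrt_nonneg _),
            Real.sqrt_eq_rpow, Real.sqrt_eq_rpow,
            ← Real.rpow_mul hSg, ← Real.rpow_mul hSg']
          ring_nf
          rfl
  -- put everything together
  calc ‖∑ᶠ x : G, ∏ j : Fin k, corrC (f j) (f' j) x‖
      = ‖∑ x ∈ S, ∏ j : Fin k, corrC (f j) (f' j) x‖ := by rw [hsum]
    _ ≤ ∑ x ∈ S, ∏ j : Fin k, c j x := by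
        refine (norm_sum_le _ _).trans (Finset.sum_le_sum fun x _ => ?_)
        rw [norm_prod]
        exact Finset.prod_le_prod (fun j _ => norm_nonneg _)
          (fun j _ => habs j x)
    _ ≤ ∏ j : Fin k, (∑ x ∈ S, c j x ^ k) ^ ((k : ℝ)⁻¹) :=
        holderK S (NeZero.ne k) (Fintype.card_fin k) c hcnonneg
    _ ≤ ∏ j : Fin k,
          normEk k (fun t => ‖f j t‖) * normEk k (fun t => ‖f' j t‖) :=
        Finset.prod_le_prod (fun j _ => Real.rpow_nonneg
          (Finset.sum_nonneg fun x _ => pow_nonneg (hcnonneg j x) k) _)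
          (fun j _ => bound j)
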